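/- Let G be a finite non-nilpotent group. Then the induced subgraph of the non-nilpotent graph on G \ nil(G) is connected with diameter at most 6. Moreover, any two vertices x, y with π(x) ≠ π(y) (distinct sets of prime divisors of their orders) are joined by a path of length at most 4. -/

import Mathlib

def nilizer {G : Type*} [Group G] (x : G) : Set G :=
  {g | Group.IsNilpotent (Subgroup.closure ({x, g} : Set G))}

def nilSet (G : Type*) [Group G] : Set G :=
  {x | ∀ y : G, Group.IsNilpotent (Subgroup.closure ({x, y} : Set G))}

/-- The non-nilpotent graph of a group: distinct `x, y` are adjacent iff
`⟨x, y⟩` is not nilpotent. -/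
def nonNilpGraph (G : Type*) [Group G] : SimpleGraph G where
  Adj x y := x ≠ y ∧ ¬ Group.IsNilpotent (Subgroup.closure ({x, y} : Set G))
  symm := by
    constructor
    rintro x y ⟨h1, h2⟩
    exact ⟨h1.symm, by rwa [Set.pair_comm]⟩
  loopless := by constructor; rintro x ⟨h, -⟩; exact h rfl


open Subgroup

section Aux
variable {G : Type*} [Group G]

/-- A subgroup contained in a nilpotent subgroup is nilpotent. -/
lemma nilpotent_of_le {K L : Subgroup G} (h : K ≤ L) (hL : Group.IsNilpotent L) :
    Group.IsNilpotent K := by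
  haveI := hL
  exact nilpotent_of_mulEquiv (Subgroup.subgroupOfEquivOfLe h)

/-- The closure of two commuting elements is nilpotent. -/
lemma nilpotent_closure_pair_of_commute {x y : G} (h : Commute x y) :
    Group.IsNilpotent (closure ({x, y} : Set G)) := by
  have hc : ∀ (m : Multiplicative ℤ) (n : Multiplicative ℤ),
      Commute (zpowersHom G x m) (zpowersHom G y n) := by
    intro m n
    exact (h.zpow_zpow _ _)
  let f := MonoidHom.noncommCoprod (zpowersHom G x) (zpowersHom G y) hc
  have hle : closure ({x, y} : Set G) ≤ f.range := by
    rw [closure_le]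
    rintro z (rfl | rfl)
    · exact ⟨(Multiplicative.ofAdd 1, Multiplicative.ofAdd 0), by
        simp [f, MonoidHom.noncommCoprod_apply]⟩
    · exact ⟨(Multiplicative.ofAdd 0, Multiplicative.ofAdd 1), by
        simp [f, MonoidHom.noncommCoprod_apply]⟩
  have : Group.IsNilpotent f.range :=
    nilpotent_of_surjective f.rangeRestrict f.rangeRestrict_surjective
  exact nilpotent_of_le hle this

lemma commute_of_coprime_orderOf_aux :
    ∀ (n : ℕ) (H : Type u) (_ : Group H) (_ : Finite H) (inst : Group.IsNilpotent H),
      Group.nilpotencyClass H ≤ n →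
      ∀ u v : H, Nat.Coprime (orderOf u) (orderOf v) → Commute u v := by
  intro n
  induction n with
  | zero =>
    intro H _ _ inst hcl u v _
    have : Subsingleton H := nilpotencyClass_zero_iff_subsingleton.mp (Nat.le_zero.mp hcl)
    exact Subsingleton.elim _ _
  | succ n ih =>
    intro H _ _ inst hcl u v hco
    have hclQ : Group.nilpotencyClass (H ⧸ Subgroup.center H) ≤ n := by
      rw [nilpotencyClass_quotient_center]
      omega
    have hdvd1 : orderOf ((QuotientGroup.mk' (Subgroup.center H)) u) ∣ orderOf u :=
      orderOf_map_dvd _ _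
    have hdvd2 : orderOf ((QuotientGroup.mk' (Subgroup.center H)) v) ∣ orderOf v :=
      orderOf_map_dvd _ _
    have hcoQ := (hco.coprime_dvd_left hdvd1).coprime_dvd_right hdvd2
    have hcommQ : Commute ((QuotientGroup.mk' (Subgroup.center H)) u)
        ((QuotientGroup.mk' (Subgroup.center H)) v) :=
      ih (H ⧸ Subgroup.center H) inferInstance inferInstance inferInstance hclQ _ _ hcoQ
    set k := u⁻¹ * (v⁻¹ * u * v) with hk
    have hkcen : k ∈ Subgroup.center H := by
      rw [← QuotientGroup.eq_one_iff (N := Subgroup.center H)]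
      have h2 : ((QuotientGroup.mk' (Subgroup.center H)) (v⁻¹ * u * v))
          = (QuotientGroup.mk' (Subgroup.center H)) u := by
        simp only [map_mul, map_inv]
        rw [mul_assoc, hcommQ.eq]
        group
      have h3 : ((k : H) : H ⧸ Subgroup.center H)
          = ((QuotientGroup.mk' (Subgroup.center H)) u)⁻¹ *
            ((QuotientGroup.mk' (Subgroup.center H)) (v⁻¹ * u * v)) := by
        simp [hk]
      rw [h3, h2]
      group
    have hkc : ∀ g : H, Commute g k := fun g => (Subgroup.mem_center_iff.mp hkcen g)
    have hconj : v⁻¹ * u * v = u * k := by rw [hk]; group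
    have h1 : k ^ orderOf u = 1 := by
      have e1 : (v⁻¹ * u * v) ^ orderOf u = 1 := by
        have : v⁻¹ * u * v = v⁻¹ * u * (v⁻¹)⁻¹ := by group
        rw [this, conj_pow, pow_orderOf_eq_one]
        group
      rw [hconj, (hkc u).mul_pow, pow_orderOf_eq_one, one_mul] at e1
      exact e1
    have h2 : k ^ orderOf v = 1 := by
      have hconj2 : u⁻¹ * v⁻¹ * u = k * v⁻¹ := by rw [hk]; group
      have e1 : (u⁻¹ * v⁻¹ * u) ^ orderOf v = 1 := by
        have : u⁻¹ * v⁻¹ * u = u⁻¹ * v⁻¹ * (u⁻¹)⁻¹ := by group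
        rw [this, conj_pow, inv_pow, pow_orderOf_eq_one]
        group
      rw [hconj2, ((hkc v⁻¹).symm).mul_pow, inv_pow, pow_orderOf_eq_one, inv_one, mul_one] at e1
      exact e1
    have hordk : orderOf k ∣ Nat.gcd (orderOf u) (orderOf v) :=
      Nat.dvd_gcd (orderOf_dvd_of_pow_eq_one h1) (orderOf_dvd_of_pow_eq_one h2)
    rw [Nat.Coprime.gcd_eq_one hco] at hordk
    have hk1 : k = 1 := orderOf_eq_one_iff.mp (Nat.dvd_one.mp hordk)
    show u * v = v * u
    calc u * v = v * (v⁻¹ * u * v) := by group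
      _ = v * (u * k) := by rw [hconj]
      _ = v * u := by rw [hk1, mul_one]

end Aux

/-- In a finite nilpotent group, elements of coprime orders commute. -/
lemma commute_of_coprime_orderOf {H : Type u} [Group H] [Finite H]
    (hH : Group.IsNilpotent H) {u v : H} (h : Nat.Coprime (orderOf u) (orderOf v)) :
    Commute u v :=
  commute_of_coprime_orderOf_aux (haveI := hH; Group.nilpotencyClass H) H inferInstance
    inferInstance hH le_rfl u v h

/-- Elements of coprime orders in a nilpotent subgroup commute. -/
lemma commute_of_coprime_mem {G : Type u} [Group G] [Finite G] {H : Subgroup G}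
    (hH : Group.IsNilpotent H) {u v : G} (hu : u ∈ H) (hv : v ∈ H)
    (h : Nat.Coprime (orderOf u) (orderOf v)) : Commute u v := by
  have e1 : orderOf (⟨u, hu⟩ : H) = orderOf u :=
    (orderOf_injective H.subtype Subtype.coe_injective ⟨u, hu⟩).symm
  have e2 : orderOf (⟨v, hv⟩ : H) = orderOf v :=
    (orderOf_injective H.subtype Subtype.coe_injective ⟨v, hv⟩).symm
  have hco : Nat.Coprime (orderOf (⟨u, hu⟩ : H)) (orderOf (⟨v, hv⟩ : H)) := by
    rw [e1, e2]; exact h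
  have := commute_of_coprime_orderOf hH hco
  have h2 := congrArg (Subtype.val) this.eq
  exact (by simpa using h2 : u * v = v * u)

section Aux2
variable {G : Type*} [Group G]

/-- CRT decomposition of an element into coprime parts. -/
lemma exists_pow_parts (x : G) {d e : ℕ} (hde : Nat.Coprime d e) (hx : x ^ (d * e) = 1) :
    ∃ i j : ℕ, x ^ i * x ^ j = x ∧ (x ^ i) ^ d = 1 ∧ (x ^ j) ^ e = 1 := by
  obtain ⟨i, hi1, hi0⟩ := Nat.chineseRemainder hde 1 0
  obtain ⟨j, hj0, hj1⟩ := Nat.chineseRemainder hde 0 1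
  have hord : orderOf x ∣ d * e := orderOf_dvd_of_pow_eq_one hx
  refine ⟨i, j, ?_, ?_, ?_⟩
  · rw [← pow_add]
    have h1 : i + j ≡ 1 [MOD d] := by simpa using hi1.add hj0
    have h2 : i + j ≡ 1 [MOD e] := by simpa using hi0.add hj1
    have h3 : i + j ≡ 1 [MOD d * e] :=
      (Nat.modEq_and_modEq_iff_modEq_mul hde).mp ⟨h1, h2⟩
    have := pow_eq_pow_iff_modEq (x := x) (n := i + j) (m := 1)
    rw [this.mpr (h3.of_dvd hord), pow_one]
  · rw [← pow_mul]
    apply orderOf_dvd_iff_pow_eq_one.mp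
    calc orderOf x ∣ d * e := hord
      _ ∣ i * d := by
        have : e ∣ i := (Nat.modEq_zero_iff_dvd).mp hi0
        obtain ⟨c, rfl⟩ := this
        ring_nf
        exact Dvd.intro c (by ring)
  · rw [← pow_mul]
    apply orderOf_dvd_iff_pow_eq_one.mp
    calc orderOf x ∣ d * e := hord
      _ ∣ j * e := by
        have : d ∣ j := (Nat.modEq_zero_iff_dvd).mp hj0
        obtain ⟨c, rfl⟩ := this
        exact Dvd.intro c (by ring)

/-- Commuting elements of coprime orders are powers of their product. -/
lemma mem_zpowers_mul {u v : G} {d e : ℕ} (h : Commute u v)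
    (hde : Nat.Coprime d e) (hu : u ^ d = 1) (hv : v ^ e = 1) :
    u ∈ zpowers (u * v) ∧ v ∈ zpowers (u * v) := by
  constructor
  · obtain ⟨k, hk1, hk0⟩ := Nat.chineseRemainder hde 1 0
    rw [mem_zpowers_iff]
    refine ⟨(k : ℤ), ?_⟩
    rw [zpow_natCast, h.mul_pow]
    have hv' : v ^ k = 1 := orderOf_dvd_iff_pow_eq_one.mp
      ((orderOf_dvd_of_pow_eq_one hv).trans ((Nat.modEq_zero_iff_dvd).mp hk0))
    have hu' : u ^ k = u ^ 1 := pow_eq_pow_iff_modEq.mpr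
      (hk1.of_dvd (orderOf_dvd_of_pow_eq_one hu))
    rw [hv', hu', mul_one, pow_one]
  · obtain ⟨k, hk0, hk1⟩ := Nat.chineseRemainder hde 0 1
    rw [mem_zpowers_iff]
    refine ⟨(k : ℤ), ?_⟩
    rw [zpow_natCast, h.mul_pow]
    have hu' : u ^ k = 1 := orderOf_dvd_iff_pow_eq_one.mp
      ((orderOf_dvd_of_pow_eq_one hu).trans ((Nat.modEq_zero_iff_dvd).mp hk0))
    have hv' : v ^ k = v ^ 1 := pow_eq_pow_iff_modEq.mpr
      (hk1.of_dvd (orderOf_dvd_of_pow_eq_one hv))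
    rw [hv', hu', one_mul, pow_one]

/-- Combination lemma: nilpotency of closures of commuting pieces. -/
lemma nilpotent_closure_mul {u w g1 g2 : G}
    (huw : Commute u w) (hug2 : Commute u g2) (hwg1 : Commute w g1) (hgg : Commute g1 g2)
    (h1 : Group.IsNilpotent (closure ({u, g1} : Set G)))
    (h2 : Group.IsNilpotent (closure ({w, g2} : Set G))) :
    Group.IsNilpotent (closure ({u * w, g1 * g2} : Set G)) := by
  set H1 := closure ({u, g1} : Set G) with hH1
  set H2 := closure ({w, g2} : Set G) with hH2
  have hz : ∀ z : G, Commute w z → Commute g2 z → ∀ h ∈ H2, Commute z h := by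
    intro z hwz hg2z
    have hle : H2 ≤ centralizer {z} := by
      rw [hH2, closure_le, Set.insert_subset_iff, Set.singleton_subset_iff]
      constructor <;>
      · rw [SetLike.mem_coe, mem_centralizer_iff]
        intro g hg
        rw [Set.mem_singleton_iff] at hg
        subst hg
        first
          | exact hwz.symm.eq
          | exact hg2z.symm.eq
    intro h hh
    have := hle hh
    rw [mem_centralizer_iff] at this
    exact (this z rfl)
  have hcomm' : ∀ a ∈ H1, ∀ b ∈ H2, Commute a b := by
    have hle : H1 ≤ centralizer (H2 : Set G) := by
      rw [hH1, closure_le, Set.insert_subset_iff, Set.singleton_subset_iff]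
      constructor <;>
      · rw [SetLike.mem_coe, mem_centralizer_iff]
        intro g hg
        first
          | exact (hz u huw.symm hug2.symm g hg).eq.symm
          | exact (hz g1 hwg1 hgg.symm g hg).eq.symm
    intro a ha b hb
    have := hle ha
    rw [mem_centralizer_iff] at this
    exact (this b hb).symm
  have hcomm : ∀ (a : H1) (b : H2), Commute (H1.subtype a) (H2.subtype b) :=
    fun a b => hcomm' a a.2 b b.2
  let f := MonoidHom.noncommCoprod H1.subtype H2.subtype hcomm
  haveI : Group.IsNilpotent H1 := h1
  haveI : Group.IsNilpotent H2 := h2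
  have hrange : Group.IsNilpotent f.range :=
    nilpotent_of_surjective f.rangeRestrict f.rangeRestrict_surjective
  refine nilpotent_of_le ?_ hrange
  rw [closure_le]
  rintro z (rfl | rfl)
  · exact ⟨(⟨u, subset_closure (by simp)⟩, ⟨w, subset_closure (by simp)⟩), rfl⟩
  · exact ⟨(⟨g1, subset_closure (by simp)⟩, ⟨g2, subset_closure (by simp)⟩), rfl⟩

end Aux2

section NilSetAux
variable {G : Type*} [Group G]

lemma one_mem_nilSet : (1 : G) ∈ nilSet G :=
  fun y => nilpotent_closure_pair_of_commute (Commute.one_left y)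

lemma mem_closure_pair_left (x y : G) : x ∈ closure ({x, y} : Set G) :=
  subset_closure (by simp)

lemma mem_closure_pair_right (x y : G) : y ∈ closure ({x, y} : Set G) :=
  subset_closure (by simp)

lemma not_nilpotent_mono {a b : G} {s : Set G} (ha : a ∈ closure s) (hb : b ∈ closure s)
    (h : ¬ Group.IsNilpotent (closure ({a, b} : Set G))) :
    ¬ Group.IsNilpotent (closure s) := by
  intro hn
  exact h (nilpotent_of_le ((closure_le _).mpr (by
    rw [Set.insert_subset_iff, Set.singleton_subset_iff]; exact ⟨ha, hb⟩)) hn)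

lemma zpowers_le_closure_pair_left (x y : G) : zpowers x ≤ closure ({x, y} : Set G) := by
  rw [zpowers_le]; exact mem_closure_pair_left x y

lemma mem_nilSet_of_mem_zpowers {a x : G} (hx : x ∈ nilSet G) (ha : a ∈ zpowers x) :
    a ∈ nilSet G := by
  intro y
  refine nilpotent_of_le ?_ (hx y)
  rw [closure_le, Set.insert_subset_iff, Set.singleton_subset_iff]
  exact ⟨(zpowers_le_closure_pair_left x y) ha, mem_closure_pair_right x y⟩

lemma exists_neighbor {x : G} (hx : x ∉ nilSet G) :
    ∃ t : G, ¬ Group.IsNilpotent (closure ({x, t} : Set G)) := by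
  by_contra h
  push_neg at h
  exact hx h

lemma not_mem_nilSet_left {x t : G} (h : ¬ Group.IsNilpotent (closure ({x, t} : Set G))) :
    x ∉ nilSet G := fun hx => h (hx t)

lemma not_mem_nilSet_right {x t : G} (h : ¬ Group.IsNilpotent (closure ({x, t} : Set G))) :
    t ∉ nilSet G := fun ht => h (by rw [Set.pair_comm]; exact ht x)

end NilSetAux

section Core
variable {G : Type*} [Group G]

/-- The set of `r`-elements commuting with all elements of order prime to `r`. -/
def centSet (G : Type*) [Group G] (r : ℕ) : Set G :=
  {g | (∃ n, g ^ r ^ n = 1) ∧ ∀ m : G, ¬ r ∣ orderOf m → Commute g m}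

lemma centSet_conj {r : ℕ} {g : G} (hg : g ∈ centSet G r) (h : G) :
    h * g * h⁻¹ ∈ centSet G r := by
  obtain ⟨⟨n, hn⟩, hc⟩ := hg
  refine ⟨⟨n, by rw [conj_pow, hn]; group⟩, ?_⟩
  intro m hm
  have hord : orderOf (h⁻¹ * m * (h⁻¹)⁻¹) = orderOf m := by
    apply orderOf_injective (MulAut.conj h⁻¹).toMonoidHom (MulEquiv.injective _)
  have h2 : Commute g (h⁻¹ * m * h) := by
    apply hc
    rw [show h⁻¹ * m * h = h⁻¹ * m * (h⁻¹)⁻¹ by group, hord]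
    exact hm
  have h3 := h2.eq
  show (h * g * h⁻¹) * m = m * (h * g * h⁻¹)
  calc (h * g * h⁻¹) * m = h * (g * (h⁻¹ * m * h)) * h⁻¹ := by group
    _ = h * ((h⁻¹ * m * h) * g) * h⁻¹ := by rw [h3]
    _ = m * (h * g * h⁻¹) := by group

lemma normal_closure_centSet (r : ℕ) : (closure (centSet G r)).Normal := by
  constructor
  intro n hn g
  induction hn using closure_induction with
  | mem s hs => exact subset_closure (centSet_conj hs g)
  | one => simpa using one_mem _
  | mul a b _ _ ha hb =>
    have : g * (a * b) * g⁻¹ = (g * a * g⁻¹) * (g * b * g⁻¹) := by group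
    rw [this]
    exact mul_mem ha hb
  | inv a _ ha =>
    have : g * a⁻¹ * g⁻¹ = (g * a * g⁻¹)⁻¹ := by group
    rw [this]
    exact inv_mem ha

lemma isPGroup_closure_centSet [Finite G] {r : ℕ} (hr : r.Prime) :
    IsPGroup r (closure (centSet G r)) := by
  haveI : Fact r.Prime := ⟨hr⟩
  set D := closure (centSet G r) with hD
  have hDcent : ∀ d ∈ D, ∀ m : G, ¬ r ∣ orderOf m → Commute d m := by
    have hle : D ≤ centralizer {m : G | ¬ r ∣ orderOf m} := by
      rw [hD, closure_le]
      intro s hs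
      rw [SetLike.mem_coe, mem_centralizer_iff]
      intro m hm
      exact (hs.2 m hm).symm.eq
    intro d hd m hm
    have := hle hd
    rw [mem_centralizer_iff] at this
    exact (this m hm).symm
  let W : Subgroup G :=
    { carrier := {g : G | g ∈ D ∧ ¬ r ∣ orderOf g}
      one_mem' := ⟨one_mem _, by
        rw [orderOf_one]
        exact fun h => hr.ne_one (Nat.dvd_one.mp h)⟩
      mul_mem' := by
        rintro a b ⟨haD, har⟩ ⟨hbD, hbr⟩
        refine ⟨mul_mem haD hbD, ?_⟩
        intro hdvd
        have hcomm : Commute a b := hDcent a haD b hbr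
        have hlcm : r ∣ Nat.lcm (orderOf a) (orderOf b) :=
          hdvd.trans hcomm.orderOf_mul_dvd_lcm
        have hmul : r ∣ orderOf a * orderOf b :=
          hlcm.trans (Nat.lcm_dvd_mul _ _)
        rcases (Nat.Prime.dvd_mul hr).mp hmul with h | h
        · exact har h
        · exact hbr h
      inv_mem' := by
        rintro a ⟨haD, har⟩
        exact ⟨inv_mem haD, by rwa [orderOf_inv]⟩ }
  have hWmem : ∀ {w : G}, w ∈ W ↔ w ∈ D ∧ ¬ r ∣ orderOf w := Iff.rfl
  have hc3 : ∀ d ∈ D, d ^ r ^ ((orderOf d).factorization r) ∈ W := by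
    intro d hd
    refine hWmem.mpr ⟨pow_mem hd _, ?_⟩
    have ho : orderOf d ≠ 0 := (orderOf_pos d).ne'
    have hdvd : r ^ ((orderOf d).factorization r) ∣ orderOf d := Nat.ordProj_dvd _ _
    rw [orderOf_pow_of_dvd (pow_ne_zero _ hr.pos.ne') hdvd]
    exact Nat.not_dvd_ordCompl hr ho
  let Wd : Subgroup D := W.subgroupOf D
  have hWdcen : Wd ≤ Subgroup.center D := by
    intro w hw
    rw [Subgroup.mem_center_iff]
    intro g
    have hcw : Commute (g : G) (w : G) :=
      hDcent g g.2 w ((hWmem.mp (mem_subgroupOf.mp hw)).2)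
    exact Subtype.ext hcw.eq
  haveI hWdnormal : Wd.Normal := by
    constructor
    intro n hn g
    have h1 : ∀ h : D, h * n = n * h := Subgroup.mem_center_iff.mp (hWdcen hn)
    have : g * n * g⁻¹ = n := by rw [h1 g]; group
    rw [this]
    exact hn
  have hQ : IsPGroup r (D ⧸ Wd) := by
    intro q
    obtain ⟨d, rfl⟩ := QuotientGroup.mk_surjective q
    refine ⟨(orderOf (d : G)).factorization r, ?_⟩
    rw [← QuotientGroup.mk_pow, QuotientGroup.eq_one_iff]
    rw [mem_subgroupOf]
    have : ((d ^ r ^ ((orderOf (d : G)).factorization r) : D) : G)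
        = (d : G) ^ r ^ ((orderOf (d : G)).factorization r) := by
      simp
    rw [this]
    exact hc3 _ d.2
  haveI : Group.IsNilpotent (D ⧸ Wd) := hQ.isNilpotent
  haveI hDnil : Group.IsNilpotent D :=
    _root_.isNilpotent_of_ker_le_center (QuotientGroup.mk' Wd)
      (by rw [QuotientGroup.ker_mk']; exact hWdcen)
  obtain ⟨P⟩ : Nonempty (Sylow r D) := inferInstance
  haveI hPnorm : (P : Subgroup D).Normal := by
    have h03 := (isNilpotent_of_finite_tfae (G := D)).out 0 3
    exact (h03.mp hDnil) r ⟨hr⟩ P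
  have hind : ¬ r ∣ (P : Subgroup D).index := P.not_dvd_index
  have hSP : ∀ s (hs : s ∈ centSet G r), (⟨s, subset_closure hs⟩ : D) ∈ (P : Subgroup D) := by
    intro s hs
    set st : D := (⟨s, subset_closure hs⟩ : D) with hst
    obtain ⟨n, hn⟩ := hs.1
    have h2 : orderOf st ∣ r ^ n := by
      apply orderOf_dvd_of_pow_eq_one
      apply Subtype.ext
      simpa [hst] using hn
    have h1 : orderOf ((QuotientGroup.mk' (P : Subgroup D)) st) ∣ r ^ n :=
      (orderOf_map_dvd _ _).trans h2
    have h3 : orderOf ((QuotientGroup.mk' (P : Subgroup D)) st) ∣ (P : Subgroup D).index := by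
      rw [Subgroup.index_eq_card]
      exact orderOf_dvd_natCard _
    have hco : Nat.Coprime (r ^ n) ((P : Subgroup D).index) :=
      Nat.Coprime.pow_left _ ((Nat.Prime.coprime_iff_not_dvd hr).mpr hind)
    have hone : orderOf ((QuotientGroup.mk' (P : Subgroup D)) st) = 1 :=
      Nat.dvd_one.mp (hco ▸ Nat.dvd_gcd h1 h3)
    have := orderOf_eq_one_iff.mp hone
    rwa [← QuotientGroup.eq_one_iff st]
  have hDP : D ≤ Subgroup.map D.subtype (P : Subgroup D) := by
    nth_rewrite 1 [hD]
    rw [closure_le]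
    intro s hs
    exact ⟨⟨s, subset_closure hs⟩, hSP s hs, rfl⟩
  have hPP : IsPGroup r (Subgroup.map D.subtype (P : Subgroup D)) :=
    P.isPGroup'.map _
  exact hPP.to_le hDP

end Core

section Neighbor
variable {G : Type*} [Group G] [Finite G]

lemma nilpotent_closure_pair_r_elements {r : ℕ} (hr : r.Prime) {a b : G}
    (ha : a ∈ centSet G r) (hb : ∃ k, b ^ r ^ k = 1) :
    Group.IsNilpotent (closure ({a, b} : Set G)) := by
  haveI : Fact r.Prime := ⟨hr⟩
  set D := closure (centSet G r) with hD
  haveI hDnormal : D.Normal := normal_closure_centSet r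
  have hDp : IsPGroup r D := isPGroup_closure_centSet hr
  have hEp : IsPGroup r (D ⊔ zpowers b : Subgroup G) := by
    intro e
    obtain ⟨k, hk⟩ := hb
    have hmem : (QuotientGroup.mk' D) (e : G)
        ∈ Subgroup.map (QuotientGroup.mk' D) (D ⊔ zpowers b) := ⟨e, e.2, rfl⟩
    rw [Subgroup.map_sup] at hmem
    have h1 : Subgroup.map (QuotientGroup.mk' D) D = ⊥ := by
      rw [Subgroup.map_eq_bot_iff, QuotientGroup.ker_mk']
    have h2 : Subgroup.map (QuotientGroup.mk' D) (zpowers b)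
        = zpowers ((QuotientGroup.mk' D) b) := (MonoidHom.map_zpowers _ _)
    rw [h1, h2, bot_sup_eq] at hmem
    obtain ⟨z, hz⟩ := (mem_zpowers_iff).mp hmem
    have hb1 : ((QuotientGroup.mk' D) b) ^ (r ^ k) = 1 := by
      rw [← map_pow, hk, map_one]
    have hmk : ((QuotientGroup.mk' D) (e : G)) ^ (r ^ k) = 1 := by
      rw [← hz, ← zpow_natCast (((QuotientGroup.mk' D) b) ^ z) (r ^ k), ← zpow_mul,
        mul_comm z (((r ^ k : ℕ) : ℤ)), zpow_mul, zpow_natCast, hb1, one_zpow]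
    have he : (e : G) ^ r ^ k ∈ D := by
      have h5 : (e : G) ^ r ^ k ∈ (QuotientGroup.mk' D).ker := by
        rw [MonoidHom.mem_ker, map_pow]
        exact hmk
      rwa [QuotientGroup.ker_mk'] at h5
    obtain ⟨n2, hn2⟩ := hDp ⟨(e : G) ^ r ^ k, he⟩
    have hcoe : ((e : G) ^ r ^ k) ^ r ^ n2 = 1 := by
      have := congrArg (Subtype.val) hn2
      simpa using this
    refine ⟨k + n2, Subtype.ext ?_⟩
    have : ((e ^ r ^ (k + n2) : (D ⊔ zpowers b : Subgroup G)) : G)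
        = (e : G) ^ r ^ (k + n2) := by simp
    rw [this]
    rw [pow_add, pow_mul]
    simpa using hcoe
  haveI : Group.IsNilpotent (D ⊔ zpowers b : Subgroup G) := hEp.isNilpotent
  refine nilpotent_of_le ?_ this
  rw [closure_le, Set.insert_subset_iff, Set.singleton_subset_iff]
  constructor
  · exact le_sup_left (α := Subgroup G) (subset_closure ha)
  · exact le_sup_right (α := Subgroup G) (mem_zpowers b)

lemma exists_coprime_neighbor {r : ℕ} (hr : r.Prime) {a : G}
    (hpow : ∃ k, a ^ r ^ k = 1) (hanil : a ∉ nilSet G) :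
    ∃ m : G, ¬ r ∣ orderOf m ∧ ¬ Group.IsNilpotent (closure ({a, m} : Set G)) := by
  by_contra hcon
  push_neg at hcon
  have hcomm : ∀ m : G, ¬ r ∣ orderOf m → Commute a m := by
    intro m hm
    apply commute_of_coprime_mem (hcon m hm) (mem_closure_pair_left a m)
      (mem_closure_pair_right a m)
    obtain ⟨k, hk⟩ := hpow
    have h1 : orderOf a ∣ r ^ k := orderOf_dvd_of_pow_eq_one hk
    exact Nat.Coprime.coprime_dvd_left h1
      (Nat.Coprime.pow_left _ ((hr.coprime_iff_not_dvd).mpr hm))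
  have haS : a ∈ centSet G r := ⟨hpow, hcomm⟩
  apply hanil
  intro g
  have ho0 : orderOf g ≠ 0 := (orderOf_pos g).ne'
  have hcop : Nat.Coprime (r ^ ((orderOf g).factorization r))
      (orderOf g / r ^ ((orderOf g).factorization r)) :=
    Nat.Coprime.pow_left _ (Nat.coprime_ordCompl hr ho0)
  obtain ⟨i, j, hij, hgi, hgj⟩ := exists_pow_parts g hcop
    (by rw [Nat.ordProj_mul_ordCompl_eq_self (orderOf g) r]; exact pow_orderOf_eq_one g)
  have h1 : Group.IsNilpotent (closure ({a, g ^ i} : Set G)) :=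
    nilpotent_closure_pair_r_elements hr haS ⟨(orderOf g).factorization r, hgi⟩
  have hg2r : ¬ r ∣ orderOf (g ^ j) := fun hdvd =>
    Nat.not_dvd_ordCompl hr ho0 (hdvd.trans (orderOf_dvd_of_pow_eq_one hgj))
  have h2 : Group.IsNilpotent (closure ({(1 : G), g ^ j} : Set G)) :=
    nilpotent_closure_pair_of_commute (Commute.one_left _)
  have hcombo := nilpotent_closure_mul (Commute.one_right a) (hcomm _ hg2r)
    (Commute.one_left _) (Commute.pow_pow (Commute.refl g) i j) h1 h2
  rw [mul_one, hij] at hcombo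
  exact hcombo

lemma exists_prime_power_part : ∀ (o : ℕ) (x : G), orderOf x = o → x ∉ nilSet G →
    ∃ (r : ℕ) (a : G), r.Prime ∧ a ∈ zpowers x ∧ (∃ k, a ^ r ^ k = 1) ∧ a ∉ nilSet G := by
  intro o
  induction o using Nat.strong_induction_on with
  | _ o ih =>
    intro x hox hx
    have ho0 : o ≠ 0 := by rw [← hox]; exact (orderOf_pos x).ne'
    have ho1 : o ≠ 1 := by
      intro h
      apply hx
      have hx1 : x = 1 := orderOf_eq_one_iff.mp (by rw [hox, h])
      rw [hx1]; exact one_mem_nilSet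
    have hr : (o.minFac).Prime := Nat.minFac_prime ho1
    set r := o.minFac with hrdef
    set α := o.factorization r with hα
    set d := r ^ α with hd
    set e := o / d with he
    have hde : d * e = o := Nat.ordProj_mul_ordCompl_eq_self o r
    have hcop : Nat.Coprime d e := Nat.Coprime.pow_left _ (Nat.coprime_ordCompl hr ho0)
    have hα1 : 1 ≤ α := by
      rw [hα]
      exact (Nat.Prime.factorization_pos_of_dvd hr ho0 (Nat.minFac_dvd o))
    have hd2 : 2 ≤ d := by
      calc 2 ≤ r := hr.two_le
        _ = r ^ 1 := (pow_one r).symm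
        _ ≤ r ^ α := Nat.pow_le_pow_right hr.pos hα1
    by_cases hecase : e = 1
    · refine ⟨r, x, hr, mem_zpowers x, ⟨α, ?_⟩, hx⟩
      have hdo : d = o := by rw [← hde, hecase, mul_one]
      show x ^ d = 1
      rw [hdo, ← hox]
      exact pow_orderOf_eq_one x
    · obtain ⟨i, j, hij, hxi, hxj⟩ := exists_pow_parts x hcop
        (by rw [hde, ← hox]; exact pow_orderOf_eq_one x)
      by_cases hu : x ^ i ∈ nilSet G
      · have hw : x ^ j ∉ nilSet G := by
          intro hwnil
          apply hx
          intro g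
          have hog0 : orderOf g ≠ 0 := (orderOf_pos g).ne'
          have hcopg : Nat.Coprime (r ^ ((orderOf g).factorization r))
              (orderOf g / r ^ ((orderOf g).factorization r)) :=
            Nat.Coprime.pow_left _ (Nat.coprime_ordCompl hr hog0)
          obtain ⟨i', j', hij', hgi', hgj'⟩ := exists_pow_parts g hcopg
            (by rw [Nat.ordProj_mul_ordCompl_eq_self (orderOf g) r]
                exact pow_orderOf_eq_one g)
          have hg2r : ¬ r ∣ orderOf (g ^ j') := fun hdvd =>
            Nat.not_dvd_ordCompl hr hog0 (hdvd.trans (orderOf_dvd_of_pow_eq_one hgj'))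
          have hwr : ¬ r ∣ orderOf (x ^ j) := fun hdvd =>
            Nat.not_dvd_ordCompl hr ho0 (hdvd.trans (orderOf_dvd_of_pow_eq_one hxj))
          have hc1 : Commute (x ^ i) (x ^ j) := Commute.pow_pow (Commute.refl x) i j
          have hc2 : Commute (x ^ i) (g ^ j') := by
            apply commute_of_coprime_mem (hu (g ^ j')) (mem_closure_pair_left _ _)
              (mem_closure_pair_right _ _)
            have hdi : orderOf (x ^ i) ∣ d := orderOf_dvd_of_pow_eq_one hxi
            exact Nat.Coprime.coprime_dvd_left hdi
              (Nat.Coprime.pow_left _ ((hr.coprime_iff_not_dvd).mpr hg2r))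
          have hc3 : Commute (x ^ j) (g ^ i') := by
            apply commute_of_coprime_mem (hwnil (g ^ i')) (mem_closure_pair_left _ _)
              (mem_closure_pair_right _ _)
            have h1 : orderOf (g ^ i') ∣ r ^ ((orderOf g).factorization r) :=
              orderOf_dvd_of_pow_eq_one hgi'
            exact Nat.Coprime.coprime_dvd_right h1
              (Nat.Coprime.pow_right _ (((hr.coprime_iff_not_dvd).mpr hwr).symm))
          have hc4 : Commute (g ^ i') (g ^ j') := Commute.pow_pow (Commute.refl g) i' j'
          have hcombo := nilpotent_closure_mul hc1 hc2 hc3 hc4 (hu (g ^ i')) (hwnil (g ^ j'))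
          rw [hij, hij'] at hcombo
          exact hcombo
        have hepos : 0 < e := Nat.ordCompl_pos r ho0
        have hoj : orderOf (x ^ j) < o := by
          have h1 : orderOf (x ^ j) ∣ e := orderOf_dvd_of_pow_eq_one hxj
          have h2 : e < o := by
            calc e < 2 * e := by omega
              _ ≤ d * e := Nat.mul_le_mul_right e hd2
              _ = o := hde
          exact lt_of_le_of_lt (Nat.le_of_dvd hepos h1) h2
        obtain ⟨r', a, hr', hmem, hpow', hanil'⟩ := ih (orderOf (x ^ j)) hoj (x ^ j) rfl hw
        refine ⟨r', a, hr', ?_, hpow', hanil'⟩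
        have hle : zpowers (x ^ j) ≤ zpowers x := by
          rw [zpowers_le]
          exact pow_mem (mem_zpowers x) j
        exact hle hmem
      · exact ⟨r, x ^ i, hr, pow_mem (mem_zpowers x) i, ⟨α, hxi⟩, hu⟩

lemma isNilpotent_of_forall_mem_nilSet (h : ∀ x : G, x ∈ nilSet G) :
    Group.IsNilpotent G := by
  have h30 := (isNilpotent_of_finite_tfae (G := G)).out 3 0
  apply h30.mp
  intro p hp P
  haveI := hp
  have hPS : (P : Subgroup G) ≤ closure (centSet G p) := by
    intro g hg
    apply Subgroup.subset_closure
    have hpow : ∃ n, g ^ p ^ n = 1 := by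
      obtain ⟨n, hn⟩ := P.isPGroup' ⟨g, hg⟩
      exact ⟨n, by simpa using congrArg Subtype.val hn⟩
    refine ⟨hpow, ?_⟩
    intro m hm
    apply commute_of_coprime_mem (h g m) (mem_closure_pair_left g m)
      (mem_closure_pair_right g m)
    obtain ⟨n, hn⟩ := hpow
    have h1 : orderOf g ∣ p ^ n := orderOf_dvd_of_pow_eq_one hn
    exact Nat.Coprime.coprime_dvd_left h1
      (Nat.Coprime.pow_left _ ((hp.out.coprime_iff_not_dvd).mpr hm))
  have hDp : IsPGroup p (closure (centSet G p)) := isPGroup_closure_centSet hp.out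
  have heq : closure (centSet G p) = (P : Subgroup G) := P.3 hDp hPS
  rw [← heq]
  exact normal_closure_centSet p

end Neighbor

section Graph
variable {G : Type*} [Group G] [Finite G]

lemma adj_of_not_nilpotent {u v : G} (hu : u ∉ nilSet G) (hv : v ∉ nilSet G)
    (h : ¬ Group.IsNilpotent (closure ({u, v} : Set G))) :
    ((nonNilpGraph G).induce {x : G | x ∉ nilSet G}).Adj ⟨u, hu⟩ ⟨v, hv⟩ := by
  have hne : u ≠ v := by
    rintro rfl
    exact h (nilpotent_closure_pair_of_commute (Commute.refl u))
  exact ⟨hne, h⟩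

lemma main_walk {x y : G} (hx : x ∉ nilSet G) (hy : y ∉ nilSet G) :
    ∃ p : ((nonNilpGraph G).induce {x : G | x ∉ nilSet G}).Walk ⟨x, hx⟩ ⟨y, hy⟩,
      p.length ≤ 4 := by
  by_cases hxy : x = y
  · subst hxy
    exact ⟨SimpleGraph.Walk.nil, by simp⟩
  obtain ⟨q, a, hq, haz, hapow, hanil⟩ := exists_prime_power_part (orderOf x) x rfl hx
  obtain ⟨w, b, hw, hbz, hbpow, hbnil⟩ := exists_prime_power_part (orderOf y) y rfl hy
  by_cases hqw : q = w
  · subst hqw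
    obtain ⟨m, hmr, hmadj⟩ := exists_coprime_neighbor hq hapow hanil
    by_cases hmb : Group.IsNilpotent (closure ({m, b} : Set G))
    · have hco : Nat.Coprime (orderOf m) (orderOf b) := by
        obtain ⟨k, hk⟩ := hbpow
        exact Nat.Coprime.coprime_dvd_right (orderOf_dvd_of_pow_eq_one hk)
          (Nat.Coprime.pow_right _ (((hq.coprime_iff_not_dvd).mpr hmr).symm))
      have hcomm : Commute m b := commute_of_coprime_mem hmb
        (mem_closure_pair_left m b) (mem_closure_pair_right m b) hco
      obtain ⟨hm_mem, hb_mem⟩ := mem_zpowers_mul hcomm hco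
        (pow_orderOf_eq_one m) (pow_orderOf_eq_one b)
      obtain ⟨s, hs⟩ := exists_neighbor hbnil
      have e1 : ¬ Group.IsNilpotent (closure ({x, m * b} : Set G)) :=
        not_nilpotent_mono (zpowers_le_closure_pair_left x (m * b) haz)
          ((zpowers_le.mpr (mem_closure_pair_right x (m * b))) hm_mem) hmadj
      have e2 : ¬ Group.IsNilpotent (closure ({m * b, s} : Set G)) :=
        not_nilpotent_mono ((zpowers_le.mpr (mem_closure_pair_left (m * b) s)) hb_mem)
          (mem_closure_pair_right (m * b) s) hs
      have e3 : ¬ Group.IsNilpotent (closure ({s, y} : Set G)) :=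
        not_nilpotent_mono ((zpowers_le.mpr (mem_closure_pair_right s y)) hbz)
          (mem_closure_pair_left s y) hs
      have hc : (m * b) ∉ nilSet G := not_mem_nilSet_left e2
      have hsmem : s ∉ nilSet G := not_mem_nilSet_left e3
      exact ⟨SimpleGraph.Walk.cons (adj_of_not_nilpotent hx hc e1)
        (SimpleGraph.Walk.cons (adj_of_not_nilpotent hc hsmem e2)
          (SimpleGraph.Walk.cons (adj_of_not_nilpotent hsmem hy e3) SimpleGraph.Walk.nil)),
        by simp⟩
    · have e1 : ¬ Group.IsNilpotent (closure ({x, m} : Set G)) :=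
        not_nilpotent_mono (zpowers_le_closure_pair_left x m haz)
          (mem_closure_pair_right x m) hmadj
      have e2 : ¬ Group.IsNilpotent (closure ({m, y} : Set G)) :=
        not_nilpotent_mono (mem_closure_pair_left m y)
          ((zpowers_le.mpr (mem_closure_pair_right m y)) hbz) hmb
      have hm : m ∉ nilSet G := not_mem_nilSet_left e2
      exact ⟨SimpleGraph.Walk.cons (adj_of_not_nilpotent hx hm e1)
        (SimpleGraph.Walk.cons (adj_of_not_nilpotent hm hy e2) SimpleGraph.Walk.nil),
        by simp⟩
  · have hco : Nat.Coprime (orderOf a) (orderOf b) := by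
      obtain ⟨k, hk⟩ := hapow
      obtain ⟨l, hl⟩ := hbpow
      have h1 : orderOf a ∣ q ^ k := orderOf_dvd_of_pow_eq_one hk
      have h2 : orderOf b ∣ w ^ l := orderOf_dvd_of_pow_eq_one hl
      have h3 : Nat.Coprime (q ^ k) (w ^ l) :=
        ((Nat.coprime_primes hq hw).mpr hqw).pow k l
      exact (h3.coprime_dvd_left h1).coprime_dvd_right h2
    by_cases hab : Group.IsNilpotent (closure ({a, b} : Set G))
    · have hcomm : Commute a b := commute_of_coprime_mem hab (mem_closure_pair_left a b)
        (mem_closure_pair_right a b) hco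
      obtain ⟨ha_mem, hb_mem⟩ := mem_zpowers_mul hcomm hco
        (pow_orderOf_eq_one a) (pow_orderOf_eq_one b)
      obtain ⟨t, ht⟩ := exists_neighbor hanil
      obtain ⟨s, hs⟩ := exists_neighbor hbnil
      have e1 : ¬ Group.IsNilpotent (closure ({x, t} : Set G)) :=
        not_nilpotent_mono (zpowers_le_closure_pair_left x t haz)
          (mem_closure_pair_right x t) ht
      have e2 : ¬ Group.IsNilpotent (closure ({t, a * b} : Set G)) :=
        not_nilpotent_mono ((zpowers_le.mpr (mem_closure_pair_right t (a * b))) ha_mem)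
          (mem_closure_pair_left t (a * b)) ht
      have e3 : ¬ Group.IsNilpotent (closure ({a * b, s} : Set G)) :=
        not_nilpotent_mono ((zpowers_le.mpr (mem_closure_pair_left (a * b) s)) hb_mem)
          (mem_closure_pair_right (a * b) s) hs
      have e4 : ¬ Group.IsNilpotent (closure ({s, y} : Set G)) :=
        not_nilpotent_mono ((zpowers_le.mpr (mem_closure_pair_right s y)) hbz)
          (mem_closure_pair_left s y) hs
      have htm : t ∉ nilSet G := not_mem_nilSet_right ht
      have hcm : (a * b) ∉ nilSet G := not_mem_nilSet_left e3
      have hsm : s ∉ nilSet G := not_mem_nilSet_left e4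
      exact ⟨SimpleGraph.Walk.cons (adj_of_not_nilpotent hx htm e1)
        (SimpleGraph.Walk.cons (adj_of_not_nilpotent htm hcm e2)
          (SimpleGraph.Walk.cons (adj_of_not_nilpotent hcm hsm e3)
            (SimpleGraph.Walk.cons (adj_of_not_nilpotent hsm hy e4) SimpleGraph.Walk.nil))),
        by simp⟩
    · have e1 : ¬ Group.IsNilpotent (closure ({x, y} : Set G)) :=
        not_nilpotent_mono (zpowers_le_closure_pair_left x y haz)
          ((zpowers_le.mpr (mem_closure_pair_right x y)) hbz) hab
      exact ⟨SimpleGraph.Walk.cons (adj_of_not_nilpotent hx hy e1) SimpleGraph.Walk.nil,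
        by simp⟩

end Graph

theorem stmt18 {G : Type*} [Group G] [Finite G] (hnn : ¬ Group.IsNilpotent G) :
    ((nonNilpGraph G).induce {x : G | x ∉ nilSet G}).Connected ∧
    (∀ u v : {x : G | x ∉ nilSet G},
      ((nonNilpGraph G).induce {x : G | x ∉ nilSet G}).dist u v ≤ 6) ∧
    (∀ u v : {x : G | x ∉ nilSet G},
      (orderOf (u : G)).primeFactors ≠ (orderOf (v : G)).primeFactors →
      ∃ p : ((nonNilpGraph G).induce {x : G | x ∉ nilSet G}).Walk u v, p.length ≤ 4) := by
  have hnonempty : ∃ x : G, x ∉ nilSet G := by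
    by_contra hall
    push_neg at hall
    exact hnn (isNilpotent_of_forall_mem_nilSet hall)
  obtain ⟨x0, hx0⟩ := hnonempty
  haveI : Nonempty ↑{x : G | x ∉ nilSet G} := ⟨⟨x0, hx0⟩⟩
  refine ⟨⟨?_⟩, ?_, ?_⟩
  · intro u v
    obtain ⟨p, _⟩ := main_walk u.2 v.2
    exact ⟨p⟩
  · intro u v
    obtain ⟨p, hp⟩ := main_walk u.2 v.2
    calc ((nonNilpGraph G).induce {x : G | x ∉ nilSet G}).dist u v ≤ p.length :=
        SimpleGraph.dist_le p
      _ ≤ 4 := hp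
      _ ≤ 6 := by omega
  · intro u v _
    obtain ⟨p, hp⟩ := main_walk u.2 v.2
    exact ⟨p, hp⟩
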